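/- Let Γ1 = (V1, E1) and Γ2 = (V2, E2) be vertex-disjoint connected cubic graphs, let (a,b) ∈ E1 and (c,d) ∈ E2, and let v1, v2 be two new vertices. Let ΓD be the graph with vertex set V1 ∪ V2 ∪ {v1, v2} and edge set (E1 \ {(a,b)}) ∪ (E2 \ {(c,d)}) ∪ {(a,v1), (b,v1), (c,v2), (d,v2), (v1,v2)}. Then ΓD is a connected cubic graph and the edge (v1,v2) is a bridge of ΓD (i.e., {(v1,v2)} is a 1-cracker). -/

import Mathlib

open SimpleGraph

/-- A graph is cubic if every vertex has exactly three neighbours. -/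
def IsCubic {V : Type*} (G : SimpleGraph V) : Prop :=
  ∀ v : V, (G.neighborSet v).ncard = 3

/-- A cracker of `G`: a nonempty set of edges of `G`, no two of which share a
vertex, whose deletion disconnects `G`, while no proper subset disconnects `G`. -/
def IsCracker {V : Type*} (G : SimpleGraph V) (C : Set (Sym2 V)) : Prop :=
  C.Nonempty ∧ C ⊆ G.edgeSet ∧
    C.Pairwise (fun e f => ∀ v : V, ¬(v ∈ e ∧ v ∈ f)) ∧
    ¬(G.deleteEdges C).Connected ∧
    ∀ C' : Set (Sym2 V), C' ⊂ C → (G.deleteEdges C').Connected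

/-- A `k`-cracker is a cracker consisting of `k` edges. -/
def IsKCracker {V : Type*} (G : SimpleGraph V) (C : Set (Sym2 V)) (k : ℕ) : Prop :=
  IsCracker G C ∧ C.ncard = k

/-- The type 1 breeding operation: delete edges (a,b) of Γ₁ and (c,d) of Γ₂, add two
new vertices v₁, v₂ and the edges (a,v₁), (b,v₁), (c,v₂), (d,v₂), (v₁,v₂). -/
def breed1 {V₁ V₂ : Type*} (G₁ : SimpleGraph V₁) (G₂ : SimpleGraph V₂)
    (a b : V₁) (c d : V₂) : SimpleGraph ((V₁ ⊕ V₂) ⊕ Fin 2) :=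
  SimpleGraph.fromRel (fun p q =>
    (∃ x y : V₁, p = Sum.inl (Sum.inl x) ∧ q = Sum.inl (Sum.inl y) ∧
        G₁.Adj x y ∧ s(x, y) ≠ s(a, b)) ∨
    (∃ x y : V₂, p = Sum.inl (Sum.inr x) ∧ q = Sum.inl (Sum.inr y) ∧
        G₂.Adj x y ∧ s(x, y) ≠ s(c, d)) ∨
    (p = Sum.inl (Sum.inl a) ∧ q = Sum.inr 0) ∨
    (p = Sum.inl (Sum.inl b) ∧ q = Sum.inr 0) ∨
    (p = Sum.inl (Sum.inr c) ∧ q = Sum.inr 1) ∨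
    (p = Sum.inl (Sum.inr d) ∧ q = Sum.inr 1) ∨
    (p = Sum.inr 0 ∧ q = Sum.inr 1))

open Sum

section
variable {V₁ V₂ : Type*} (G₁ : SimpleGraph V₁) (G₂ : SimpleGraph V₂) (a b : V₁) (c d : V₂)

lemma nb_v1 :
    (breed1 G₁ G₂ a b c d).neighborSet (inr 0) = {inl (inl a), inl (inl b), inr 1} := by
  ext p
  simp only [mem_neighborSet, breed1, fromRel_adj]
  rcases p with (x|x)|i
  · simp
  · simp
  · fin_cases i <;> simp [Fin.ext_iff]

lemma nb_v2 :
    (breed1 G₁ G₂ a b c d).neighborSet (inr 1) = {inl (inr c), inl (inr d), inr 0} := by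
  ext p
  simp only [mem_neighborSet, breed1, fromRel_adj]
  rcases p with (x|x)|i
  · simp
  · simp
  · fin_cases i <;> simp [Fin.ext_iff]

end
section
variable {V₁ V₂ : Type*} (G₁ : SimpleGraph V₁) (G₂ : SimpleGraph V₂) (a b : V₁) (c d : V₂)

lemma nb_inl₁ (x : V₁) (hx : x ≠ a) (hx' : x ≠ b) :
    (breed1 G₁ G₂ a b c d).neighborSet (inl (inl x)) =
      (fun y => inl (inl y)) '' G₁.neighborSet x := by
  ext p
  simp only [mem_neighborSet, breed1, fromRel_adj, Set.mem_image, mem_neighborSet]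
  constructor
  · rintro ⟨hne, (⟨u,v,hu,hv,h,hs⟩|⟨u,v,hu,hv,h,hs⟩|⟨h1,h2⟩|⟨h1,h2⟩|⟨h1,h2⟩|⟨h1,h2⟩|⟨h1,h2⟩)|
      (⟨u,v,hu,hv,h,hs⟩|⟨u,v,hu,hv,h,hs⟩|⟨h1,h2⟩|⟨h1,h2⟩|⟨h1,h2⟩|⟨h1,h2⟩|⟨h1,h2⟩)⟩ <;>
      first
      | (exact absurd h1 (by simp [hx, hx']))
      | (exact absurd h2 (by simp [hx, hx']))
      | (obtain rfl : x = u := by simpa using hu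
         obtain rfl : p = inl (inl v) := hv
         exact ⟨v, h, rfl⟩)
      | (obtain rfl : x = v := by simpa using hv
         obtain rfl : p = inl (inl u) := hu
         exact ⟨u, h.symm, rfl⟩)
      | simp_all
  · rintro ⟨y, hy, rfl⟩
    refine ⟨by simp [hy.ne], Or.inl (Or.inl ⟨x, y, rfl, rfl, hy, ?_⟩)⟩
    rw [ne_eq, Sym2.eq_iff]
    push_neg
    exact ⟨fun h => absurd h hx, fun h => absurd h hx'⟩

lemma nb_a (hab : a ≠ b) :
    (breed1 G₁ G₂ a b c d).neighborSet (inl (inl a)) =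
      (fun y => inl (inl y)) '' (G₁.neighborSet a \ {b}) ∪ {inr 0} := by
  ext p
  simp only [mem_neighborSet, breed1, fromRel_adj, Set.mem_union, Set.mem_image,
    Set.mem_diff, Set.mem_singleton_iff, mem_neighborSet]
  constructor
  · rintro ⟨hne, (⟨u,v,hu,hv,h,hs⟩|⟨u,v,hu,hv,h,hs⟩|⟨h1,h2⟩|⟨h1,h2⟩|⟨h1,h2⟩|⟨h1,h2⟩|⟨h1,h2⟩)|
      (⟨u,v,hu,hv,h,hs⟩|⟨u,v,hu,hv,h,hs⟩|⟨h1,h2⟩|⟨h1,h2⟩|⟨h1,h2⟩|⟨h1,h2⟩|⟨h1,h2⟩)⟩ <;>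
      first
      | (obtain rfl : a = u := by simpa using hu
         obtain rfl : p = inl (inl v) := hv
         refine Or.inl ⟨v, ⟨h, ?_⟩, rfl⟩
         rintro rfl; exact hs (by simp)
         )
      | (obtain rfl : a = v := by simpa using hv
         obtain rfl : p = inl (inl u) := hu
         refine Or.inl ⟨u, ⟨h.symm, ?_⟩, rfl⟩
         rintro rfl
         exact hs (Sym2.eq_swap)
         )
      | simp_all
  · rintro (⟨y, ⟨hy, hyb⟩, rfl⟩ | rfl)
    · refine ⟨by simp [hy.ne], Or.inl (Or.inl ⟨a, y, rfl, rfl, hy, ?_⟩)⟩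
      rw [ne_eq, Sym2.eq_iff]
      push_neg
      exact ⟨fun _ => hyb, fun h => absurd h.symm hab.symm⟩
    · exact ⟨by simp, Or.inl (by tauto)⟩

end
section
variable {V₁ V₂ : Type*} (G₁ : SimpleGraph V₁) (G₂ : SimpleGraph V₂) (a b : V₁) (c d : V₂)

lemma nb_inl₂ (x : V₂) (hx : x ≠ c) (hx' : x ≠ d) :
    (breed1 G₁ G₂ a b c d).neighborSet (inl (inr x)) =
      (fun y => inl (inr y)) '' G₂.neighborSet x := by
  ext p
  simp only [mem_neighborSet, breed1, fromRel_adj, Set.mem_image, mem_neighborSet]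
  constructor
  · rintro ⟨hne, (⟨u,v,hu,hv,h,hs⟩|⟨u,v,hu,hv,h,hs⟩|⟨h1,h2⟩|⟨h1,h2⟩|⟨h1,h2⟩|⟨h1,h2⟩|⟨h1,h2⟩)|
      (⟨u,v,hu,hv,h,hs⟩|⟨u,v,hu,hv,h,hs⟩|⟨h1,h2⟩|⟨h1,h2⟩|⟨h1,h2⟩|⟨h1,h2⟩|⟨h1,h2⟩)⟩ <;>
      first
      | (exact absurd h1 (by simp [hx, hx']))
      | (exact absurd h2 (by simp [hx, hx']))
      | (obtain rfl : x = u := by simpa using hu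
         obtain rfl : p = inl (inr v) := hv
         exact ⟨v, h, rfl⟩)
      | (obtain rfl : x = v := by simpa using hv
         obtain rfl : p = inl (inr u) := hu
         exact ⟨u, h.symm, rfl⟩)
      | simp_all
  · rintro ⟨y, hy, rfl⟩
    refine ⟨by simp [hy.ne], Or.inl (Or.inr (Or.inl ⟨x, y, rfl, rfl, hy, ?_⟩))⟩
    rw [ne_eq, Sym2.eq_iff]
    push_neg
    exact ⟨fun h => absurd h hx, fun h => absurd h hx'⟩

lemma nb_c (hcd : c ≠ d) :
    (breed1 G₁ G₂ a b c d).neighborSet (inl (inr c)) =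
      (fun y => inl (inr y)) '' (G₂.neighborSet c \ {d}) ∪ {inr 1} := by
  ext p
  simp only [mem_neighborSet, breed1, fromRel_adj, Set.mem_union, Set.mem_image,
    Set.mem_diff, Set.mem_singleton_iff, mem_neighborSet]
  constructor
  · rintro ⟨hne, (⟨u,v,hu,hv,h,hs⟩|⟨u,v,hu,hv,h,hs⟩|⟨h1,h2⟩|⟨h1,h2⟩|⟨h1,h2⟩|⟨h1,h2⟩|⟨h1,h2⟩)|
      (⟨u,v,hu,hv,h,hs⟩|⟨u,v,hu,hv,h,hs⟩|⟨h1,h2⟩|⟨h1,h2⟩|⟨h1,h2⟩|⟨h1,h2⟩|⟨h1,h2⟩)⟩ <;>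
      first
      | (obtain rfl : c = u := by simpa using hu
         obtain rfl : p = inl (inr v) := hv
         refine Or.inl ⟨v, ⟨h, ?_⟩, rfl⟩
         rintro rfl; exact hs (by simp))
      | (obtain rfl : c = v := by simpa using hv
         obtain rfl : p = inl (inr u) := hu
         refine Or.inl ⟨u, ⟨h.symm, ?_⟩, rfl⟩
         rintro rfl
         exact hs (Sym2.eq_swap))
      | simp_all
  · rintro (⟨y, ⟨hy, hyd⟩, rfl⟩ | rfl)
    · refine ⟨by simp [hy.ne], Or.inl (Or.inr (Or.inl ⟨c, y, rfl, rfl, hy, ?_⟩))⟩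
      rw [ne_eq, Sym2.eq_iff]
      push_neg
      exact ⟨fun _ => hyd, fun h => absurd h.symm hcd.symm⟩
    · exact ⟨by simp, Or.inl (by tauto)⟩

end
section
variable {V₁ V₂ : Type*} (G₁ : SimpleGraph V₁) (G₂ : SimpleGraph V₂) (a b : V₁) (c d : V₂)

lemma nb_b (hab : a ≠ b) :
    (breed1 G₁ G₂ a b c d).neighborSet (inl (inl b)) =
      (fun y => inl (inl y)) '' (G₁.neighborSet b \ {a}) ∪ {inr 0} := by
  ext p
  simp only [mem_neighborSet, breed1, fromRel_adj, Set.mem_union, Set.mem_image,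
    Set.mem_diff, Set.mem_singleton_iff, mem_neighborSet]
  constructor
  · rintro ⟨hne, (⟨u,v,hu,hv,h,hs⟩|⟨u,v,hu,hv,h,hs⟩|⟨h1,h2⟩|⟨h1,h2⟩|⟨h1,h2⟩|⟨h1,h2⟩|⟨h1,h2⟩)|
      (⟨u,v,hu,hv,h,hs⟩|⟨u,v,hu,hv,h,hs⟩|⟨h1,h2⟩|⟨h1,h2⟩|⟨h1,h2⟩|⟨h1,h2⟩|⟨h1,h2⟩)⟩ <;>
      first
      | (obtain rfl : b = u := by simpa using hu
         obtain rfl : p = inl (inl v) := hv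
         refine Or.inl ⟨v, ⟨h, ?_⟩, rfl⟩
         rintro rfl; exact hs Sym2.eq_swap)
      | (obtain rfl : b = v := by simpa using hv
         obtain rfl : p = inl (inl u) := hu
         refine Or.inl ⟨u, ⟨h.symm, ?_⟩, rfl⟩
         rintro rfl
         exact hs rfl)
      | simp_all
  · rintro (⟨y, ⟨hy, hya⟩, rfl⟩ | rfl)
    · refine ⟨by simp [hy.ne], Or.inl (Or.inl ⟨b, y, rfl, rfl, hy, ?_⟩)⟩
      rw [ne_eq, Sym2.eq_iff]
      push_neg
      exact ⟨fun h => absurd h.symm hab, fun _ => hya⟩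
    · exact ⟨by simp, Or.inl (by tauto)⟩

lemma nb_d (hcd : c ≠ d) :
    (breed1 G₁ G₂ a b c d).neighborSet (inl (inr d)) =
      (fun y => inl (inr y)) '' (G₂.neighborSet d \ {c}) ∪ {inr 1} := by
  ext p
  simp only [mem_neighborSet, breed1, fromRel_adj, Set.mem_union, Set.mem_image,
    Set.mem_diff, Set.mem_singleton_iff, mem_neighborSet]
  constructor
  · rintro ⟨hne, (⟨u,v,hu,hv,h,hs⟩|⟨u,v,hu,hv,h,hs⟩|⟨h1,h2⟩|⟨h1,h2⟩|⟨h1,h2⟩|⟨h1,h2⟩|⟨h1,h2⟩)|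
      (⟨u,v,hu,hv,h,hs⟩|⟨u,v,hu,hv,h,hs⟩|⟨h1,h2⟩|⟨h1,h2⟩|⟨h1,h2⟩|⟨h1,h2⟩|⟨h1,h2⟩)⟩ <;>
      first
      | (obtain rfl : d = u := by simpa using hu
         obtain rfl : p = inl (inr v) := hv
         refine Or.inl ⟨v, ⟨h, ?_⟩, rfl⟩
         rintro rfl; exact hs Sym2.eq_swap)
      | (obtain rfl : d = v := by simpa using hv
         obtain rfl : p = inl (inr u) := hu
         refine Or.inl ⟨u, ⟨h.symm, ?_⟩, rfl⟩
         rintro rfl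
         exact hs rfl)
      | simp_all
  · rintro (⟨y, ⟨hy, hyc⟩, rfl⟩ | rfl)
    · refine ⟨by simp [hy.ne], Or.inl (Or.inr (Or.inl ⟨d, y, rfl, rfl, hy, ?_⟩))⟩
      rw [ne_eq, Sym2.eq_iff]
      push_neg
      exact ⟨fun h => absurd h.symm hcd, fun _ => hyc⟩
    · exact ⟨by simp, Or.inl (by tauto)⟩

end
section
variable {V₁ V₂ : Type*} {G₁ : SimpleGraph V₁} {G₂ : SimpleGraph V₂} {a b : V₁} {c d : V₂}

lemma adj_a0 : (breed1 G₁ G₂ a b c d).Adj (inl (inl a)) (inr 0) := by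
  simp only [breed1, fromRel_adj]; exact ⟨by simp, Or.inl (by tauto)⟩

lemma adj_b0 : (breed1 G₁ G₂ a b c d).Adj (inl (inl b)) (inr 0) := by
  simp only [breed1, fromRel_adj]; exact ⟨by simp, Or.inl (by tauto)⟩

lemma adj_c1 : (breed1 G₁ G₂ a b c d).Adj (inl (inr c)) (inr 1) := by
  simp only [breed1, fromRel_adj]; exact ⟨by simp, Or.inl (by tauto)⟩

lemma adj_d1 : (breed1 G₁ G₂ a b c d).Adj (inl (inr d)) (inr 1) := by
  simp only [breed1, fromRel_adj]; exact ⟨by simp, Or.inl (by tauto)⟩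

lemma adj_01 : (breed1 G₁ G₂ a b c d).Adj (inr 0) (inr 1) := by
  simp only [breed1, fromRel_adj]; exact ⟨by simp [Fin.ext_iff], Or.inl (by tauto)⟩

lemma reachable_invariant {V : Type*} {G : SimpleGraph V} {β : Sort*} {f : V → β}
    (h : ∀ u v, G.Adj u v → f u = f v) {u v : V} (hr : G.Reachable u v) : f u = f v := by
  obtain ⟨w⟩ := hr
  induction w with
  | nil => rfl
  | cons h' p ih => exact (h _ _ h').trans ih

lemma reach₁ (x y : V₁) (h : G₁.Reachable x y) :
    (breed1 G₁ G₂ a b c d).Reachable (inl (inl x)) (inl (inl y)) := by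
  obtain ⟨w⟩ := h
  induction w with
  | nil => exact Reachable.refl _
  | @cons u v w h' p ih =>
    refine Reachable.trans ?_ ih
    by_cases hs : s(u, v) = s(a, b)
    · rcases Sym2.eq_iff.mp hs with ⟨rfl, rfl⟩ | ⟨rfl, rfl⟩
      · exact (adj_a0.reachable).trans (adj_b0.symm.reachable)
      · exact (adj_b0.reachable).trans (adj_a0.symm.reachable)
    · refine Adj.reachable ?_
      simp only [breed1, fromRel_adj]
      exact ⟨by simp [h'.ne], Or.inl (Or.inl ⟨u, v, rfl, rfl, h', hs⟩)⟩

lemma reach₂ (x y : V₂) (h : G₂.Reachable x y) :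
    (breed1 G₁ G₂ a b c d).Reachable (inl (inr x)) (inl (inr y)) := by
  obtain ⟨w⟩ := h
  induction w with
  | nil => exact Reachable.refl _
  | @cons u v w h' p ih =>
    refine Reachable.trans ?_ ih
    by_cases hs : s(u, v) = s(c, d)
    · rcases Sym2.eq_iff.mp hs with ⟨rfl, rfl⟩ | ⟨rfl, rfl⟩
      · exact (adj_c1.reachable).trans (adj_d1.symm.reachable)
      · exact (adj_d1.reachable).trans (adj_c1.symm.reachable)
    · refine Adj.reachable ?_
      simp only [breed1, fromRel_adj]
      exact ⟨by simp [h'.ne], Or.inl (Or.inr (Or.inl ⟨u, v, rfl, rfl, h', hs⟩))⟩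

lemma hub (h₁ : G₁.Connected) (h₂ : G₂.Connected) :
    ∀ p, (breed1 G₁ G₂ a b c d).Reachable p (inr 0) := by
  rintro ((x | x) | i)
  · exact (reach₁ x a (h₁.preconnected x a)).trans adj_a0.reachable
  · exact ((reach₂ x c (h₂.preconnected x c)).trans adj_c1.reachable).trans
      adj_01.symm.reachable
  · fin_cases i
    · exact Reachable.refl _
    · exact adj_01.symm.reachable

lemma breed1_connected (h₁ : G₁.Connected) (h₂ : G₂.Connected) :
    (breed1 G₁ G₂ a b c d).Connected := by
  rw [connected_iff]
  exact ⟨fun p q => (hub h₁ h₂ p).trans (hub h₁ h₂ q).symm, ⟨inr 0⟩⟩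

end
section
variable {V₁ V₂ : Type*} {G₁ : SimpleGraph V₁} {G₂ : SimpleGraph V₂} {a b : V₁} {c d : V₂}

/-- the side function -/
def sideFn : (V₁ ⊕ V₂) ⊕ Fin 2 → Bool
  | inl (inl _) => false
  | inl (inr _) => true
  | inr i => decide (i = 1)

lemma breed1_bridge :
    (breed1 G₁ G₂ a b c d).IsBridge s(Sum.inr 0, Sum.inr 1) := by
  rw [isBridge_iff]
  intro hr
  have key : ∀ u v : (V₁ ⊕ V₂) ⊕ Fin 2,
      ((breed1 G₁ G₂ a b c d) \ fromEdgeSet {s(Sum.inr 0, Sum.inr 1)}).Adj u v →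
      sideFn u = sideFn v := by
    intro u v huv
    rw [sdiff_adj, fromEdgeSet_adj] at huv
    obtain ⟨hadj, hne⟩ := huv
    simp only [breed1, fromRel_adj] at hadj
    obtain ⟨hne', hr⟩ := hadj
    have hns : ¬ (s(u, v) = s(Sum.inr 0, Sum.inr 1)) := fun h => hne ⟨by simpa using h, hne'⟩
    rcases hr with (⟨x,y,rfl,rfl,_,_⟩|⟨x,y,rfl,rfl,_,_⟩|⟨rfl,rfl⟩|⟨rfl,rfl⟩|⟨rfl,rfl⟩|⟨rfl,rfl⟩|⟨rfl,rfl⟩)|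
      (⟨x,y,rfl,rfl,_,_⟩|⟨x,y,rfl,rfl,_,_⟩|⟨rfl,rfl⟩|⟨rfl,rfl⟩|⟨rfl,rfl⟩|⟨rfl,rfl⟩|⟨rfl,rfl⟩) <;>
      simp [sideFn] at hns ⊢
  have := reachable_invariant key hr
  simp [sideFn] at this

end
section
variable {V₁ V₂ : Type*} {G₁ : SimpleGraph V₁} {G₂ : SimpleGraph V₂} {a b : V₁} {c d : V₂}

lemma ncard_aux {α β : Type*} {s : Set α} (f : α → β) (hf : Function.Injective f) (z : β)
    (hz : ∀ x, f x ≠ z) (hfin : s.Finite) : (f '' s ∪ {z}).ncard = s.ncard + 1 := by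
  have hdisj : Disjoint (f '' s) {z} :=
    Set.disjoint_singleton_right.mpr (by rintro ⟨x, -, hx⟩; exact hz x hx)
  rw [Set.ncard_union_eq hdisj (hfin.image f) (Set.finite_singleton z),
    Set.ncard_image_of_injective _ hf, Set.ncard_singleton]

lemma inj₁ : Function.Injective (fun y : V₁ => (inl (inl y) : (V₁ ⊕ V₂) ⊕ Fin 2)) :=
  fun _ _ h => by simpa using h

lemma inj₂ : Function.Injective (fun y : V₂ => (inl (inr y) : (V₁ ⊕ V₂) ⊕ Fin 2)) :=
  fun _ _ h => by simpa using h

lemma breed1_cubic (hc₁ : IsCubic G₁) (hc₂ : IsCubic G₂)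
    (hab : G₁.Adj a b) (hcd : G₂.Adj c d) : IsCubic (breed1 G₁ G₂ a b c d) := by
  have hfa : (G₁.neighborSet a).Finite := Set.finite_of_ncard_ne_zero (by rw [hc₁ a]; norm_num)
  have hfb : (G₁.neighborSet b).Finite := Set.finite_of_ncard_ne_zero (by rw [hc₁ b]; norm_num)
  have hfc : (G₂.neighborSet c).Finite := Set.finite_of_ncard_ne_zero (by rw [hc₂ c]; norm_num)
  have hfd : (G₂.neighborSet d).Finite := Set.finite_of_ncard_ne_zero (by rw [hc₂ d]; norm_num)
  rintro ((x | x) | i)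
  · by_cases hx1 : x = a
    · subst hx1
      rw [nb_a G₁ G₂ x b c d hab.ne,
        ncard_aux _ inj₁ _ (fun y => by simp) (hfa.subset Set.diff_subset),
        Set.ncard_diff_singleton_of_mem (show b ∈ G₁.neighborSet x from hab), hc₁ x]
    · by_cases hx2 : x = b
      · subst hx2
        rw [nb_b G₁ G₂ a x c d hab.ne,
          ncard_aux _ inj₁ _ (fun y => by simp) (hfb.subset Set.diff_subset),
          Set.ncard_diff_singleton_of_mem (show a ∈ G₁.neighborSet x from hab.symm), hc₁ x]
      · rw [nb_inl₁ G₁ G₂ a b c d x hx1 hx2, Set.ncard_image_of_injective _ inj₁, hc₁ x]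
  · by_cases hx1 : x = c
    · subst hx1
      rw [nb_c G₁ G₂ a b x d hcd.ne,
        ncard_aux _ inj₂ _ (fun y => by simp) (hfc.subset Set.diff_subset),
        Set.ncard_diff_singleton_of_mem (show d ∈ G₂.neighborSet x from hcd), hc₂ x]
    · by_cases hx2 : x = d
      · subst hx2
        rw [nb_d G₁ G₂ a b c x hcd.ne,
          ncard_aux _ inj₂ _ (fun y => by simp) (hfd.subset Set.diff_subset),
          Set.ncard_diff_singleton_of_mem (show c ∈ G₂.neighborSet x from hcd.symm), hc₂ x]
      · rw [nb_inl₂ G₁ G₂ a b c d x hx1 hx2, Set.ncard_image_of_injective _ inj₂, hc₂ x]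
  · have hi : i = 0 ∨ i = 1 := by omega
    rcases hi with rfl | rfl
    · rw [nb_v1 G₁ G₂ a b c d]
      exact Set.ncard_eq_three.mpr ⟨_, _, _, by simp [hab.ne], by simp, by simp, rfl⟩
    · rw [nb_v2 G₁ G₂ a b c d]
      exact Set.ncard_eq_three.mpr ⟨_, _, _, by simp [hcd.ne], by simp, by simp, rfl⟩

end

/-- the result of a type 1 breeding operation on connected cubic graphs
is a connected cubic graph in which the new edge (v₁,v₂) is a bridge. -/
theorem breed1_spec {V₁ V₂ : Type*} (G₁ : SimpleGraph V₁) (G₂ : SimpleGraph V₂)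
    (h₁ : G₁.Connected) (h₂ : G₂.Connected) (hc₁ : IsCubic G₁) (hc₂ : IsCubic G₂)
    (a b : V₁) (hab : G₁.Adj a b) (c d : V₂) (hcd : G₂.Adj c d) :
    (breed1 G₁ G₂ a b c d).Connected ∧ IsCubic (breed1 G₁ G₂ a b c d) ∧
      (breed1 G₁ G₂ a b c d).IsBridge s(Sum.inr 0, Sum.inr 1) := by
  exact ⟨breed1_connected h₁ h₂, breed1_cubic hc₁ hc₂ hab hcd, breed1_bridge⟩
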